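/- Let f : X × Y → ℝ be square-integrable with respect to the product measure μ ⊗ ν of two probability measures, and let q_i, q_i′ (valued in X, law μ) and q_{∼i} (valued in Y, law ν) be mutually independent random variables. Set A = f(q_i, q_{∼i}) and A_B^{(i)} = f(q_i′, q_{∼i}). Then (1/2)·E[(A − A_B^{(i)})²] = E[Var(f | q_{∼i})], i.e. the expectation of the Jansen estimator kernel equals the expected conditional variance of the output given all inputs except the i-th, which is the numerator of the total-order Sobol' index S_{Ti}. -/

import Mathlib

open MeasureTheory ProbabilityTheory

section Aux

variable {X Y : Type*} [MeasurableSpace X] [MeasurableSpace Y]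

lemma my_measurePreserving_fst (μ : Measure X) (ν : Measure Y) [SFinite ν] [IsProbabilityMeasure ν] :
    MeasurePreserving (Prod.fst : X × Y → X) (μ.prod ν) μ :=
  ⟨measurable_fst, by rw [Measure.map_fst_prod, measure_univ, one_smul]⟩

lemma my_measurePreserving_snd (μ : Measure X) (ν : Measure Y) [SFinite ν] [IsProbabilityMeasure μ] :
    MeasurePreserving (Prod.snd : X × Y → Y) (μ.prod ν) ν :=
  ⟨measurable_snd, by rw [Measure.map_snd_prod, measure_univ, one_smul]⟩

/-- For `g ∈ L²(μ)` with `μ` a probability measure,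
`∫∫ (g x - g x')² dμ dμ = 2 Var(g)`. -/
lemma jansen_pair_integral (μ : Measure X) [IsProbabilityMeasure μ]
    (g : X → ℝ) (hg : MemLp g 2 μ) :
    ∫ q : X × X, (g q.1 - g q.2) ^ 2 ∂(μ.prod μ) = 2 * variance g μ := by
  set m : ℝ := ∫ x, g x ∂μ with hm
  set s : ℝ := ∫ x, g x ^ 2 ∂μ with hs
  have hgi : Integrable g μ := hg.integrable one_le_two
  have hgs : Integrable (fun x => g x ^ 2) μ := hg.integrable_sq
  have h1 : MemLp (fun q : X × X => g q.1) 2 (μ.prod μ) :=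
    hg.comp_measurePreserving (my_measurePreserving_fst μ μ)
  have h2 : MemLp (fun q : X × X => g q.2) 2 (μ.prod μ) :=
    hg.comp_measurePreserving (my_measurePreserving_snd μ μ)
  have hint : Integrable (fun q : X × X => (g q.1 - g q.2) ^ 2) (μ.prod μ) :=
    (h1.sub h2).integrable_sq
  rw [MeasureTheory.integral_prod _ hint]
  have hinner : ∀ x, ∫ x', (g x - g x') ^ 2 ∂μ = g x ^ 2 - 2 * g x * m + s := by
    intro x
    have : (fun x' => (g x - g x') ^ 2)
        = fun x' => (g x ^ 2 - 2 * g x * g x') + g x' ^ 2 := by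
      funext x'; ring
    have ha : Integrable (fun x' => g x ^ 2 - 2 * g x * g x') μ :=
      (integrable_const _).sub (hgi.const_mul _)
    rw [this, integral_add ha hgs,
      integral_sub (integrable_const (g x ^ 2)) (hgi.const_mul (2 * g x)), integral_const,
      integral_const_mul]
    simp only [measure_univ, ENNReal.toReal_one, one_smul, probReal_univ]
    rfl
  simp_rw [hinner]
  have houter : ∫ x, (g x ^ 2 - 2 * g x * m + s) ∂μ = s - 2 * m * m + s := by
    have : (fun x => g x ^ 2 - 2 * g x * m + s)
        = fun x => (g x ^ 2 - (2 * m) * g x) + s := by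
      funext x; ring
    have ha : Integrable (fun x => g x ^ 2 - 2 * m * g x) μ := hgs.sub (hgi.const_mul _)
    rw [this, integral_add ha (integrable_const s),
      integral_sub hgs (hgi.const_mul (2 * m)), integral_const, integral_const_mul]
    simp only [measure_univ, ENNReal.toReal_one, one_smul, probReal_univ]
    rfl
  rw [houter, variance_eq_sub hg]
  have : μ[g ^ (2 : ℕ)] = s := by rw [hs]; rfl
  rw [this]
  have : μ[g] = m := rfl
  rw [this]; ring

/-- coordinate permutation `(y, x, x') ↦ (x, x', y)`. -/
def jansenEquiv (X Y : Type*) [MeasurableSpace X] [MeasurableSpace Y] :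
    Y × X × X ≃ᵐ X × X × Y :=
  MeasurableEquiv.prodComm.trans MeasurableEquiv.prodAssoc

end Aux

/-- Jansen pick-freeze identity: with A = f(q_i, q_{∼i}) and the cross-sample
A_B^{(i)} = f(q_i′, q_{∼i}), built from three mutually independent random variables with
laws μ, μ, ν, one has (1/2)·E[(A − A_B^{(i)})²] = E[Var(f | q_{∼i})], the numerator of
the total-order Sobol' index. Here Var(f | q_{∼i}) is the function
y ↦ Var_μ(x ↦ f(x, y)). -/
theorem jansen_total_order_estimator
    {X Y W : Type*} [MeasurableSpace X] [MeasurableSpace Y] [MeasurableSpace W]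
    (μ : Measure X) (ν : Measure Y) (P : Measure W)
    [IsProbabilityMeasure μ] [IsProbabilityMeasure ν] [IsProbabilityMeasure P]
    (f : X × Y → ℝ) (hf : MemLp f 2 (μ.prod ν))
    (qi qi' : W → X) (qI : W → Y)
    (hqi : Measurable qi) (hqi' : Measurable qi') (hqI : Measurable qI)
    (hindep : Measure.map (fun w => (qi w, qi' w, qI w)) P = μ.prod (μ.prod ν)) :
    (1 / 2 : ℝ) * ∫ w, (f (qi w, qI w) - f (qi' w, qI w)) ^ 2 ∂P =
      ∫ y, variance (fun x => f (x, y)) μ ∂ν := by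
  set Λ : Measure (X × X × Y) := μ.prod (μ.prod ν) with hΛ
  set g : X × X × Y → ℝ := fun p => (f (p.1, p.2.2) - f (p.2.1, p.2.2)) ^ 2 with hg
  -- MemLp of the two components over Λ
  have hπ1 : MeasurePreserving (fun p : X × X × Y => (p.1, p.2.2)) Λ (μ.prod ν) :=
    (MeasurePreserving.id μ).prod (my_measurePreserving_snd μ ν)
  have hπ2 : MeasurePreserving (fun p : X × X × Y => (p.2.1, p.2.2)) Λ (μ.prod ν) := by
    have : (fun p : X × X × Y => (p.2.1, p.2.2)) = Prod.snd := rfl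
    rw [this]
    exact my_measurePreserving_snd μ (μ.prod ν)
  have hA : MemLp (fun p : X × X × Y => f (p.1, p.2.2)) 2 Λ := hf.comp_measurePreserving hπ1
  have hB : MemLp (fun p : X × X × Y => f (p.2.1, p.2.2)) 2 Λ := hf.comp_measurePreserving hπ2
  have hgint : Integrable g Λ := (hA.sub hB).integrable_sq
  -- Step 1: transfer from P to Λ
  have hT : Measurable fun w => (qi w, qi' w, qI w) := (hqi.prodMk (hqi'.prodMk hqI))
  have step1 : ∫ w, (f (qi w, qI w) - f (qi' w, qI w)) ^ 2 ∂P = ∫ p, g p ∂Λ := by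
    rw [← hindep] at hgint ⊢
    exact (integral_map hT.aemeasurable hgint.aestronglyMeasurable).symm
  -- Step 2: reorder coordinates to ν.prod (μ.prod μ)
  set e : Y × X × X ≃ᵐ X × X × Y := jansenEquiv X Y with he_def
  have he : MeasurePreserving e (ν.prod (μ.prod μ)) Λ := by
    have h1 : MeasurePreserving (MeasurableEquiv.prodComm : Y × X × X ≃ᵐ (X × X) × Y)
        (ν.prod (μ.prod μ)) ((μ.prod μ).prod ν) := Measure.measurePreserving_swap
    have h2 := measurePreserving_prodAssoc μ μ ν
    have hco : ⇑e = ⇑(MeasurableEquiv.prodAssoc : (X × X) × Y ≃ᵐ X × X × Y) ∘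
        ⇑(MeasurableEquiv.prodComm : Y × X × X ≃ᵐ (X × X) × Y) := rfl
    rw [hco]
    exact h2.comp h1
  have step2 : ∫ p, g p ∂Λ = ∫ p : Y × X × X, g (e p) ∂(ν.prod (μ.prod μ)) :=
    (he.integral_comp' g).symm
  have hgeint : Integrable (fun p : Y × X × X => g (e p)) (ν.prod (μ.prod μ)) :=
    (he.integrable_comp_emb e.measurableEmbedding).mpr hgint
  have step3 : ∫ p : Y × X × X, g (e p) ∂(ν.prod (μ.prod μ))
      = ∫ y, ∫ q : X × X, (f (q.1, y) - f (q.2, y)) ^ 2 ∂(μ.prod μ) ∂ν := by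
    rw [MeasureTheory.integral_prod _ hgeint]
    rfl
  -- a.e. slices are in L²
  have hslice : ∀ᵐ y ∂ν, MemLp (fun x => f (x, y)) 2 μ := by
    have hsm : ∀ᵐ y ∂ν, AEStronglyMeasurable (fun x => f (x, y)) μ := by
      have := (hf.aestronglyMeasurable.prod_swap :
        AEStronglyMeasurable (fun z : Y × X => f z.swap) (ν.prod μ))
      exact this.prodMk_left
    have hsq : ∀ᵐ y ∂ν, Integrable (fun x => f (x, y) ^ 2) μ :=
      hf.integrable_sq.prod_left_ae
    filter_upwards [hsm, hsq] with y h1 h2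
    exact (memLp_two_iff_integrable_sq h1).mpr h2
  have step4 : ∫ y, ∫ q : X × X, (f (q.1, y) - f (q.2, y)) ^ 2 ∂(μ.prod μ) ∂ν
      = ∫ y, 2 * variance (fun x => f (x, y)) μ ∂ν := by
    refine integral_congr_ae ?_
    filter_upwards [hslice] with y hy
    exact jansen_pair_integral μ _ hy
  rw [step1, step2, step3, step4, integral_const_mul]
  ring
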